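/- arXiv:1705.01568 — 10 statements merged into one kernel-verified Lean document; each statement's English description precedes it below -/
import Mathlib

section
/- (Fisher's theorem of natural selection for the constant-fitness replicator equation.) Let u : ℝ → ℝⁿ be a differentiable solution of the constant-fitness replicator equation u̇_i = u_i(m_i − m̄(u)) whose values lie in the simplex S_n. Then for every t, the derivative of the mean fitness along the solution satisfies d/dt m̄(u(t)) = Σ_{i=1}^n m_i² u_i(t) − (Σ_{i=1}^n m_i u_i(t))², and this quantity (the population variance in fitness) is nonnegative. -/
/-- **Fisher's theorem of natural selection.** Along any differentiable
simplex-valued solution of the constant-fitness replicator equation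
`u̇ᵢ = uᵢ (mᵢ − m̄(u))`, `m̄(u) = ∑ᵢ mᵢ uᵢ`, the derivative of the mean fitness equals the
population variance in fitness `∑ᵢ mᵢ² uᵢ − (∑ᵢ mᵢ uᵢ)²`, which is nonnegative. -/
theorem stmt1 (n : ℕ) (m : Fin n → ℝ) (u : ℝ → Fin n → ℝ)
    (hS : ∀ t, (∀ i, 0 ≤ u t i) ∧ ∑ i, u t i = 1)
    (hode : ∀ i t, HasDerivAt (fun s => u s i) (u t i * (m i - ∑ j, m j * u t j)) t) :
    ∀ t, HasDerivAt (fun s => ∑ i, m i * u s i)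
        (∑ i, m i ^ 2 * u t i - (∑ i, m i * u t i) ^ 2) t ∧
      0 ≤ ∑ i, m i ^ 2 * u t i - (∑ i, m i * u t i) ^ 2 := by
  intro t
  constructor
  · have h : HasDerivAt (fun s => ∑ i, m i * u s i)
        (∑ i, m i * (u t i * (m i - ∑ j, m j * u t j))) t :=
      HasDerivAt.fun_sum fun i _ => (hode i t).const_mul (m i)
    convert h using 1
    have : ∑ i, m i * (u t i * (m i - ∑ j, m j * u t j))
        = ∑ i, (m i ^ 2 * u t i - m i * u t i * (∑ j, m j * u t j)) :=
      Finset.sum_congr rfl fun i _ => by ring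
    rw [this, Finset.sum_sub_distrib, ← Finset.sum_mul]
    ring
  · have hnn := (hS t).1
    have hsum := (hS t).2
    have key := Finset.sum_mul_sq_le_sq_mul_sq Finset.univ
      (fun i => m i * Real.sqrt (u t i)) (fun i => Real.sqrt (u t i))
    have e1 : ∀ i : Fin n, (m i * Real.sqrt (u t i)) * Real.sqrt (u t i) = m i * u t i := by
      intro i; rw [mul_assoc, Real.mul_self_sqrt (hnn i)]
    have e2 : ∀ i : Fin n, (m i * Real.sqrt (u t i)) ^ 2 = m i ^ 2 * u t i := by
      intro i; rw [mul_pow, Real.sq_sqrt (hnn i)]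
    have e3 : ∀ i : Fin n, (Real.sqrt (u t i)) ^ 2 = u t i := fun i => Real.sq_sqrt (hnn i)
    simp only [e1, e2, e3, hsum, mul_one] at key
    linarith
end

section
/- Suppose m_1 > m_j for all j = 2,...,n. Let u : [0,∞) → ℝⁿ be a differentiable solution of the constant-fitness replicator equation u̇_i = u_i(m_i − m̄(u)) whose values lie in S_n and whose initial condition u(0) lies in the interior of S_n (all coordinates strictly positive). Then u(t) → e_1 = (1,0,...,0) as t → ∞. -/
open Filter Real Set

/-- If `m₁ > mⱼ` for all `j ≠ 1`, then any differentiable solution of the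
constant-fitness replicator equation on `[0,∞)` with values in the simplex and with
initial condition in the interior of the simplex converges to `e₁ = (1,0,…,0)` as `t → ∞`. -/
theorem stmt2 (n : ℕ) (hn : 0 < n) (m : Fin n → ℝ)
    (hm : ∀ j, j ≠ (⟨0, hn⟩ : Fin n) → m ⟨0, hn⟩ > m j)
    (u : ℝ → Fin n → ℝ)
    (hS : ∀ t, 0 ≤ t → (∀ i, 0 ≤ u t i) ∧ ∑ i, u t i = 1)
    (hint : ∀ i, 0 < u 0 i)
    (hode : ∀ i, ∀ t, 0 ≤ t →
      HasDerivAt (fun s => u s i) (u t i * (m i - ∑ j, m j * u t j)) t) :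
    Filter.Tendsto u Filter.atTop
      (nhds (fun i => if i = (⟨0, hn⟩ : Fin n) then 1 else 0)) := by
  set i0 : Fin n := ⟨0, hn⟩ with hi0
  -- continuity of coordinates on [0,∞)
  have hcont : ∀ i, ContinuousOn (fun t => u t i) (Set.Ici 0) := fun i t ht =>
    ((hode i t ht).continuousAt).continuousWithinAt
  have hmax : Continuous fun t : ℝ => max t 0 := continuous_id.max continuous_const
  have hmem : ∀ t : ℝ, max t 0 ∈ Set.Ici (0:ℝ) := fun t => Set.mem_Ici.2 (le_max_right _ _)
  set M : ℝ → ℝ := fun t => ∑ j, m j * u (max t 0) j with hM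
  have hMcont : Continuous M := by
    apply continuous_finset_sum
    intro j _
    exact continuous_const.mul ((hcont j).comp_continuous hmax hmem)
  set F : ℝ → ℝ := fun t => ∫ s in (0:ℝ)..t, M s with hFdef
  have hFderiv : ∀ t : ℝ, HasDerivAt F (M t) t := fun t =>
    (hMcont.integral_hasStrictDerivAt 0 t).hasDerivAt
  have hF0 : F 0 = 0 := intervalIntegral.integral_same
  have hFcont : Continuous F :=
    continuous_iff_continuousAt.2 fun t => (hFderiv t).continuousAt
  -- explicit solution
  have key : ∀ i, ∀ t, 0 ≤ t → u t i = u 0 i * Real.exp (m i * t - F t) := by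
    intro i t ht
    have hg : ∀ x ∈ Set.Icc (0:ℝ) t,
        (fun s => u s i * Real.exp (F s - m i * s)) x
          = (fun s => u s i * Real.exp (F s - m i * s)) 0 := by
      apply constant_of_has_deriv_right_zero
      · exact ((hcont i).mono (Set.Icc_subset_Ici_self)).mul
          ((hFcont.sub (continuous_const.mul continuous_id)).continuousOn.rexp)
      · intro x hx
        have h1 : HasDerivAt (fun s => u s i) (u x i * (m i - M x)) x := by
          have := hode i x hx.1
          simp only [hM, max_eq_left hx.1]
          exact this
        have h2 : HasDerivAt (fun s => F s - m i * s) (M x - m i) x := by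
          have h2' := (hFderiv x).sub ((hasDerivAt_id x).const_mul (m i))
          simp only [mul_one] at h2'
          exact h2'
        have h3 : HasDerivAt (fun s => u s i * Real.exp (F s - m i * s)) _ x := h1.mul h2.exp
        have h4 : HasDerivAt (fun s => u s i * Real.exp (F s - m i * s)) 0 x := by
          convert h3 using 1
          ring
        exact h4.hasDerivWithinAt
    have hx : u t i * Real.exp (F t - m i * t) = u 0 i := by
      simpa [hF0] using hg t ⟨ht, le_rfl⟩
    rw [← hx, mul_assoc, ← Real.exp_add]
    norm_num
  have hu0 : 0 < u 0 i0 := hint i0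
  -- the normalizing sum
  set T : ℝ → ℝ := fun t => ∑ j, u 0 j * Real.exp ((m j - m i0) * t) with hT
  have hTpos : ∀ t, 0 < T t := fun t =>
    Finset.sum_pos (fun j _ => mul_pos (hint j) (Real.exp_pos _))
      (Finset.univ_nonempty_iff.2 ⟨i0⟩)
  have hexpF : ∀ t, 0 ≤ t → Real.exp (F t) = ∑ j, u 0 j * Real.exp (m j * t) := by
    intro t ht
    have h1 : (1:ℝ) = ∑ j, u 0 j * Real.exp (m j * t - F t) := by
      rw [← (hS t ht).2]
      exact Finset.sum_congr rfl fun j _ => key j t ht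
    calc Real.exp (F t) = (∑ j, u 0 j * Real.exp (m j * t - F t)) * Real.exp (F t) := by
          rw [← h1, one_mul]
      _ = ∑ j, u 0 j * Real.exp (m j * t) := by
          rw [Finset.sum_mul]
          refine Finset.sum_congr rfl fun j _ => ?_
          rw [mul_assoc, ← Real.exp_add]
          norm_num
  -- explicit formula with ratios
  have hformula : ∀ i, ∀ t, 0 ≤ t →
      u t i = u 0 i * Real.exp ((m i - m i0) * t) / T t := by
    intro i t ht
    have hSplit : Real.exp (F t) = Real.exp (m i0 * t) * T t := by
      rw [hexpF t ht, hT, Finset.mul_sum]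
      refine Finset.sum_congr rfl fun j _ => ?_
      rw [mul_comm (Real.exp (m i0 * t)), mul_assoc, ← Real.exp_add]
      congr 2
      ring
    rw [key i t ht]
    rw [eq_div_iff (hTpos t).ne']
    have hTne : T t = Real.exp (F t) / Real.exp (m i0 * t) := by
      rw [hSplit]; field_simp
    rw [hTne]
    rw [div_eq_mul_inv, ← Real.exp_neg, ← Real.exp_add, mul_assoc, ← Real.exp_add]
    congr 2
    ring
  -- limits
  have hNlim : ∀ i, Tendsto (fun t => u 0 i * Real.exp ((m i - m i0) * t)) atTop
      (nhds (if i = i0 then u 0 i0 else 0)) := by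
    intro i
    by_cases hi : i = i0
    · subst hi
      simp only [if_pos rfl, sub_self, zero_mul, Real.exp_zero, mul_one]
      exact tendsto_const_nhds
    · rw [if_neg hi]
      have hlt : m i - m i0 < 0 := sub_neg.2 (hm i hi)
      have h1 : Tendsto (fun t : ℝ => (m i0 - m i) * t) atTop atTop :=
        Tendsto.const_mul_atTop (by linarith) tendsto_id
      have h2 : Tendsto (fun t : ℝ => Real.exp ((m i - m i0) * t)) atTop (nhds 0) := by
        have := Real.tendsto_exp_neg_atTop_nhds_zero.comp h1
        refine this.congr fun t => ?_
        simp only [Function.comp]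
        congr 1
        ring
      simpa using h2.const_mul (u 0 i)
  have hTlim : Tendsto T atTop (nhds (u 0 i0)) := by
    have := tendsto_finset_sum (Finset.univ : Finset (Fin n))
      (fun j _ => hNlim j)
    simpa using this
  rw [tendsto_pi_nhds]
  intro i
  have hdiv : Tendsto (fun t => u 0 i * Real.exp ((m i - m i0) * t) / T t) atTop
      (nhds ((if i = i0 then u 0 i0 else 0) / u 0 i0)) :=
    (hNlim i).div hTlim hu0.ne'
  have heq : ∀ᶠ t in atTop, u 0 i * Real.exp ((m i - m i0) * t) / T t = u t i := by
    filter_upwards [eventually_ge_atTop (0:ℝ)] with t ht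
    exact (hformula i t ht).symm
  have := hdiv.congr' heq
  convert this using 2
  split_ifs
  · rw [div_self hu0.ne']
  · rw [zero_div]
end

section
/- (Fisher's theorem for partnership games.) Let A be a symmetric n×n real matrix and let u : ℝ → ℝⁿ be a differentiable solution of the replicator equation u̇_i = u_i((Au)_i − u·Au) whose values lie in the simplex S_n. Then for every t, d/dt (u(t)·A u(t)) = 2 Σ_{i=1}^n u_i(t) ((Au(t))_i − u(t)·A u(t))², which is nonnegative; hence the mean fitness m̄(u) = u·Au is nondecreasing along solutions. -/
open Matrix

/-- **Fisher's theorem for partnership games.** For a symmetric matrix `A`,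
along any differentiable simplex-valued solution of the replicator equation
`u̇ᵢ = uᵢ ((Au)ᵢ − u·Au)`, the derivative of the mean fitness `m̄(u) = u·Au` equals
`2 ∑ᵢ uᵢ ((Au)ᵢ − u·Au)²`, which is nonnegative; hence the mean fitness is nondecreasing. -/
theorem stmt4 (n : ℕ) (A : Matrix (Fin n) (Fin n) ℝ) (hA : A.IsSymm)
    (u : ℝ → Fin n → ℝ)
    (hS : ∀ t, (∀ i, 0 ≤ u t i) ∧ ∑ i, u t i = 1)
    (hode : ∀ i t, HasDerivAt (fun s => u s i)
      (u t i * (A.mulVec (u t) i - u t ⬝ᵥ A.mulVec (u t))) t) :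
    (∀ t, HasDerivAt (fun s => u s ⬝ᵥ A.mulVec (u s))
        (2 * ∑ i, u t i * (A.mulVec (u t) i - u t ⬝ᵥ A.mulVec (u t)) ^ 2) t ∧
      0 ≤ 2 * ∑ i, u t i * (A.mulVec (u t) i - u t ⬝ᵥ A.mulVec (u t)) ^ 2) ∧
    Monotone (fun t => u t ⬝ᵥ A.mulVec (u t)) := by
  have key : ∀ t, HasDerivAt (fun s => u s ⬝ᵥ A.mulVec (u s))
      (2 * ∑ i, u t i * (A.mulVec (u t) i - u t ⬝ᵥ A.mulVec (u t)) ^ 2) t := by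
    intro t
    set m : ℝ := u t ⬝ᵥ A.mulVec (u t) with hm
    set v : Fin n → ℝ := A.mulVec (u t) with hv
    set w : Fin n → ℝ := fun i => u t i * (v i - m) with hw
    have hd : HasDerivAt (fun s => ∑ i, ∑ j, u s i * A i j * u s j)
        (∑ i, ∑ j, (w i * A i j * u t j + u t i * A i j * w j)) t := by
      apply HasDerivAt.fun_sum
      intro i _
      apply HasDerivAt.fun_sum
      intro j _
      exact ((hode i t).mul_const (A i j)).mul (hode j t)
    have hfeq : (fun s => ∑ i, ∑ j, u s i * A i j * u s j)
        = fun s => u s ⬝ᵥ A.mulVec (u s) := by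
      funext s
      simp [dotProduct, mulVec, Finset.mul_sum, mul_assoc]
    rw [hfeq] at hd
    have hmsum : m = ∑ i, u t i * v i := by
      simp [hm, hv, dotProduct]
    have hsum0 : ∑ i, w i = 0 := by
      simp only [hw, mul_sub]
      rw [Finset.sum_sub_distrib, ← Finset.sum_mul, (hS t).2, one_mul, hmsum]
      exact sub_self _
    have hfirst : ∑ i, ∑ j, w i * A i j * u t j = ∑ i, w i * v i := by
      refine Finset.sum_congr rfl fun i _ => ?_
      simp [hv, mulVec, dotProduct, Finset.mul_sum, mul_assoc]
    have hsecond : ∑ i, ∑ j, u t i * A i j * w j = ∑ i, w i * v i := by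
      rw [Finset.sum_comm]
      refine Finset.sum_congr rfl fun j _ => ?_
      have : ∀ i, u t i * A i j * w j = w j * (A j i * u t i) := by
        intro i
        rw [hA.apply i j]
        ring
      simp only [this]
      rw [← Finset.mul_sum]
      simp [hv, mulVec, dotProduct]
    have halg : 2 * ∑ i, u t i * (v i - m) ^ 2
        = ∑ i, ∑ j, (w i * A i j * u t j + u t i * A i j * w j) := by
      have h1 : ∑ i, u t i * (v i - m) ^ 2 = ∑ i, (w i * v i - w i * m) := by
        refine Finset.sum_congr rfl fun i _ => ?_
        simp only [hw]; ring
      rw [h1, Finset.sum_sub_distrib, ← Finset.sum_mul, hsum0, zero_mul, sub_zero]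
      simp only [Finset.sum_add_distrib]
      rw [hfirst, hsecond]
      ring
    rw [← halg] at hd
    exact hd
  have hnn : ∀ t, 0 ≤ 2 * ∑ i, u t i * (A.mulVec (u t) i - u t ⬝ᵥ A.mulVec (u t)) ^ 2 := by
    intro t
    have : 0 ≤ ∑ i, u t i * (A.mulVec (u t) i - u t ⬝ᵥ A.mulVec (u t)) ^ 2 :=
      Finset.sum_nonneg fun i _ => mul_nonneg ((hS t).1 i) (sq_nonneg _)
    linarith
  refine ⟨fun t => ⟨key t, hnn t⟩, ?_⟩
  have hdiff : Differentiable ℝ (fun t => u t ⬝ᵥ A.mulVec (u t)) :=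
    fun t => (key t).differentiableAt
  apply monotone_of_deriv_nonneg hdiff
  intro t
  rw [(key t).deriv]
  exact hnn t
end

section
/- Let A be an n×n real matrix with symmetric part B = (A+Aᵀ)/2, and let u : ℝ → ℝⁿ be a differentiable solution of the replicator equation u̇_i = u_i((Au)_i − u·Au) whose values lie in the simplex S_n. Then for every t, the derivative of the mean fitness along the solution is d/dt (u(t)·A u(t)) = 2(Σ_{i=1}^n u_i(t) (Bu(t))_i (Au(t))_i − (u(t)·A u(t))²). -/
open Matrix

/-- For an arbitrary matrix `A` with symmetric part `B = (A + Aᵀ)/2`,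
along any differentiable simplex-valued solution of the replicator equation
`u̇ᵢ = uᵢ ((Au)ᵢ − u·Au)`, the derivative of the mean fitness `m̄(u) = u·Au` equals
`2 (∑ᵢ uᵢ (Bu)ᵢ (Au)ᵢ − (u·Au)²)`. -/
theorem stmt5 (n : ℕ) (A B : Matrix (Fin n) (Fin n) ℝ)
    (hB : B = (1 / 2 : ℝ) • (A + Aᵀ))
    (u : ℝ → Fin n → ℝ)
    (hS : ∀ t, (∀ i, 0 ≤ u t i) ∧ ∑ i, u t i = 1)
    (hode : ∀ i t, HasDerivAt (fun s => u s i)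
      (u t i * (A.mulVec (u t) i - u t ⬝ᵥ A.mulVec (u t))) t) :
    ∀ t, HasDerivAt (fun s => u s ⬝ᵥ A.mulVec (u s))
      (2 * (∑ i, u t i * B.mulVec (u t) i * A.mulVec (u t) i
        - (u t ⬝ᵥ A.mulVec (u t)) ^ 2)) t := by
  intro t
  set v := u t with hv
  set m := v ⬝ᵥ A.mulVec v with hm
  set d : Fin n → ℝ := fun i => v i * (A.mulVec v i - m) with hd
  -- derivative of the expanded double sum
  have hder : HasDerivAt (fun s => ∑ i, ∑ j, u s i * (A i j * u s j))
      (∑ i, ∑ j, (d i * (A i j * v j) + v i * (A i j * d j))) t := by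
    apply HasDerivAt.fun_sum
    intro i _
    apply HasDerivAt.fun_sum
    intro j _
    have h := (hode i t).fun_mul ((hasDerivAt_const t (A i j)).fun_mul (hode j t))
    convert h using 1
    · rfl
    simp only [hd]
    ring
  have hfun : (fun s => u s ⬝ᵥ A.mulVec (u s))
      = fun s => ∑ i, ∑ j, u s i * (A i j * u s j) := by
    funext s
    simp [dotProduct, mulVec, Finset.mul_sum]
  -- key algebraic identities
  have hBv : ∀ i, B.mulVec v i = (1/2) * (A.mulVec v i + Aᵀ.mulVec v i) := by
    intro i
    subst hB
    simp [Matrix.add_mulVec, Matrix.smul_mulVec, Pi.smul_apply, smul_eq_mul]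
    ring
  have fact1 : ∑ i, v i * Aᵀ.mulVec v i = m := by
    rw [hm]
    simp only [dotProduct, mulVec, transpose_apply, Finset.mul_sum]
    rw [Finset.sum_comm]
    exact Finset.sum_congr rfl fun i _ => Finset.sum_congr rfl fun j _ => by ring
  have hvBv : ∑ i, v i * B.mulVec v i = m := by
    have : ∑ i, v i * B.mulVec v i
        = (1/2) * ((∑ i, v i * A.mulVec v i) + ∑ i, v i * Aᵀ.mulVec v i) := by
      rw [mul_add, Finset.mul_sum, Finset.mul_sum, ← Finset.sum_add_distrib]
      exact Finset.sum_congr rfl fun i _ => by rw [hBv]; ring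
    rw [this, fact1]
    have : ∑ i, v i * A.mulVec v i = m := by rw [hm]; rfl
    rw [this]; ring
  -- identify the derivative values
  have hval : ∑ i, ∑ j, (d i * (A i j * v j) + v i * (A i j * d j))
      = 2 * (∑ i, v i * B.mulVec v i * A.mulVec v i - m ^ 2) := by
    have h1 : ∑ i, ∑ j, d i * (A i j * v j) = ∑ i, d i * A.mulVec v i := by
      exact Finset.sum_congr rfl fun i _ => by
        simp [mulVec, dotProduct, Finset.mul_sum]
    have h2 : ∑ i, ∑ j, v i * (A i j * d j) = ∑ j, Aᵀ.mulVec v j * d j := by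
      rw [Finset.sum_comm]
      refine Finset.sum_congr rfl fun j _ => ?_
      simp only [mulVec, dotProduct, transpose_apply, Finset.sum_mul]
      exact Finset.sum_congr rfl fun i _ => by ring
    have hsplit : ∑ i, ∑ j, (d i * (A i j * v j) + v i * (A i j * d j))
        = (∑ i, ∑ j, d i * (A i j * v j)) + ∑ i, ∑ j, v i * (A i j * d j) := by
      rw [← Finset.sum_add_distrib]
      exact Finset.sum_congr rfl fun i _ => by rw [← Finset.sum_add_distrib]
    rw [hsplit, h1, h2]
    have h3 : (∑ i, d i * A.mulVec v i) + ∑ i, Aᵀ.mulVec v i * d i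
        = ∑ i, (2 * (v i * B.mulVec v i * A.mulVec v i) - 2 * m * (v i * B.mulVec v i)) := by
      rw [← Finset.sum_add_distrib]
      refine Finset.sum_congr rfl fun i _ => ?_
      rw [hBv i, hd]
      ring
    rw [h3, Finset.sum_sub_distrib, ← Finset.mul_sum, ← Finset.mul_sum, hvBv]
    ring
  rw [hfun, ← hval]
  exact hder
end

section
/- Let A be an n×n real matrix with symmetric part B = (A+Aᵀ)/2 and skew-symmetric part C = (A−Aᵀ)/2, and let û ∈ ℝⁿ with û·𝟏 = 1. Then the following are equivalent: (i) û satisfies both Aû = m̄(û)𝟏 (û is a replicator equilibrium) and Bû = μ𝟏 for some μ ∈ ℝ (û is a constrained critical point of the mean fitness); (ii) Bû = m̄(û)𝟏 and Cû = 0. Moreover, in case (i) the multiplier necessarily equals μ = m̄(û). -/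
open Matrix

/-- For `A = B + C` (`B` symmetric part, `C` skew-symmetric part) and `û`
with `û·𝟏 = 1`, the following are equivalent: (i) `Aû = m̄(û)𝟏` and `Bû = μ𝟏` for some `μ`;
(ii) `Bû = m̄(û)𝟏` and `Cû = 0`. Moreover, in case (i) the multiplier necessarily equals
`μ = m̄(û)`, where `m̄(û) = û·Aû`. -/
theorem stmt10 (n : ℕ) (A B C : Matrix (Fin n) (Fin n) ℝ)
    (hB : B = (1 / 2 : ℝ) • (A + Aᵀ)) (hC : C = (1 / 2 : ℝ) • (A - Aᵀ))
    (uh : Fin n → ℝ) (h1 : uh ⬝ᵥ (fun _ => 1) = 1) :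
    ((A.mulVec uh = (fun _ => uh ⬝ᵥ A.mulVec uh) ∧ ∃ μ : ℝ, B.mulVec uh = (fun _ => μ)) ↔
      (B.mulVec uh = (fun _ => uh ⬝ᵥ A.mulVec uh) ∧ C.mulVec uh = 0)) ∧
    (∀ μ : ℝ, A.mulVec uh = (fun _ => uh ⬝ᵥ A.mulVec uh) →
      B.mulVec uh = (fun _ => μ) → μ = uh ⬝ᵥ A.mulVec uh) := by
  set m := uh ⬝ᵥ A.mulVec uh with hm
  have hconst : ∀ c : ℝ, uh ⬝ᵥ (fun _ : Fin n => c) = c := by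
    intro c
    have h2 : uh ⬝ᵥ (fun _ : Fin n => c) = c * (uh ⬝ᵥ (fun _ : Fin n => 1)) := by
      simp [dotProduct, Finset.mul_sum, mul_comm]
    rw [h2, h1, mul_one]
  have hAt : uh ⬝ᵥ Aᵀ.mulVec uh = m := by
    rw [mulVec_transpose, dotProduct_comm, ← dotProduct_mulVec, hm]
  have hBdot : uh ⬝ᵥ B.mulVec uh = m := by
    rw [hB, smul_mulVec, dotProduct_smul, add_mulVec, dotProduct_add, ← hm, hAt, smul_eq_mul]
    ring
  have hBC : A = B + C := by
    rw [hB, hC]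
    ext i j
    simp [Matrix.add_apply, Matrix.smul_apply]
    ring
  have hmul : ∀ μ : ℝ, B.mulVec uh = (fun _ => μ) → μ = m := by
    intro μ hμ
    have := hBdot
    rw [hμ, hconst] at this
    exact this
  constructor
  · constructor
    · rintro ⟨hA, μ, hμ⟩
      have hμm := hmul μ hμ
      subst hμm
      refine ⟨hμ, ?_⟩
      have : C.mulVec uh = A.mulVec uh - B.mulVec uh := by
        rw [hBC, add_mulVec]; abel
      rw [this, hA, hμ]
      ext i; simp
    · rintro ⟨hBu, hCu⟩
      refine ⟨?_, m, hBu⟩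
      rw [hBC, add_mulVec, hBu, hCu]
      ext i; simp
  · intro μ _ hμ
    exact hmul μ hμ
end

section
/- (Theorem 2, sufficiency.) Let A = B + C be an n×n real matrix with B = (A+Aᵀ)/2 and C = (A−Aᵀ)/2. Suppose there exists an n×n real matrix M with C = MB and M𝟏 = 0. Then every û ∈ ℝⁿ with û·𝟏 = 1 satisfying the constrained critical point condition Bû = m̄(û)𝟏 also satisfies Cû = 0, and hence Aû = m̄(û)𝟏, i.e., û is an equilibrium of the replicator equation with matrix A. -/
open Matrix

/-- **Theorem 2, sufficiency.** Let `A = B + C` with `B = (A + Aᵀ)/2` and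
`C = (A − Aᵀ)/2`. If there is a matrix `M` with `C = M B` and `M𝟏 = 0`, then every `û` with
`û·𝟏 = 1` satisfying the constrained critical point condition `Bû = m̄(û)𝟏` also satisfies
`Cû = 0`, and hence `Aû = m̄(û)𝟏`, i.e. `û` is an equilibrium of the replicator equation. -/
theorem stmt11 (n : ℕ) (A B C M : Matrix (Fin n) (Fin n) ℝ)
    (hB : B = (1 / 2 : ℝ) • (A + Aᵀ)) (hC : C = (1 / 2 : ℝ) • (A - Aᵀ))
    (hM : C = M * B) (hM1 : M.mulVec (fun _ => 1) = 0) :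
    ∀ uh : Fin n → ℝ, uh ⬝ᵥ (fun _ => 1) = 1 →
      B.mulVec uh = (fun _ => uh ⬝ᵥ A.mulVec uh) →
      C.mulVec uh = 0 ∧ A.mulVec uh = (fun _ => uh ⬝ᵥ A.mulVec uh) := by
  intro uh _ hcrit
  set m : ℝ := uh ⬝ᵥ A.mulVec uh with hm
  have hA : A = B + C := by
    rw [hB, hC]; ext i j; simp [Matrix.add_apply]; ring
  have hCu : C.mulVec uh = 0 := by
    rw [hM, ← Matrix.mulVec_mulVec, hcrit]
    have : (fun _ : Fin n => m) = m • (fun _ : Fin n => (1 : ℝ)) := by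
      ext i; simp
    rw [this, Matrix.mulVec_smul, hM1, smul_zero]
  refine ⟨hCu, ?_⟩
  rw [hA, Matrix.add_mulVec, hCu, add_zero, hcrit]
end

section
/- (Theorem 2, necessity.) Let A = B + C be an n×n real matrix with B = (A+Aᵀ)/2 invertible and C = (A−Aᵀ)/2. Suppose û ∈ ℝⁿ with û·𝟏 = 1 satisfies Bû = m̄(û)𝟏, Cû = 0, and m̄(û) ≠ 0. Then the matrix M := C B⁻¹ satisfies C = MB and M𝟏 = 0; that is, each row of C is a linear combination of the rows of B with coefficients μ_{ik} satisfying Σ_k μ_{ik} = 0 for each i. -/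
open Matrix

/-- **Theorem 2, necessity.** Let `A = B + C` with `B = (A + Aᵀ)/2`
invertible and `C = (A − Aᵀ)/2`. If `û` with `û·𝟏 = 1` satisfies `Bû = m̄(û)𝟏`, `Cû = 0`,
and `m̄(û) ≠ 0`, then the matrix `M := C B⁻¹` satisfies `C = M B` and `M𝟏 = 0`. -/
theorem stmt12 (n : ℕ) (A B C : Matrix (Fin n) (Fin n) ℝ)
    (hB : B = (1 / 2 : ℝ) • (A + Aᵀ)) (hC : C = (1 / 2 : ℝ) • (A - Aᵀ))
    (hdet : IsUnit B.det)
    (uh : Fin n → ℝ) (h1 : uh ⬝ᵥ (fun _ => 1) = 1)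
    (heq : B.mulVec uh = (fun _ => uh ⬝ᵥ A.mulVec uh))
    (hker : C.mulVec uh = 0) (hm : uh ⬝ᵥ A.mulVec uh ≠ 0) :
    C = (C * B⁻¹) * B ∧ (C * B⁻¹).mulVec (fun _ => 1) = 0 := by
  set m : ℝ := uh ⬝ᵥ A.mulVec uh with hmdef
  constructor
  · rw [Matrix.mul_assoc, Matrix.nonsing_inv_mul B hdet, Matrix.mul_one]
  · have hone : (fun _ => (1 : ℝ)) = B.mulVec (m⁻¹ • uh) := by
      rw [Matrix.mulVec_smul, heq]
      funext i
      simp [smul_eq_mul, inv_mul_cancel₀ hm]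
    have hinv : B⁻¹.mulVec (B.mulVec (m⁻¹ • uh)) = m⁻¹ • uh := by
      rw [Matrix.mulVec_mulVec, Matrix.nonsing_inv_mul B hdet, Matrix.one_mulVec]
    rw [hone, ← Matrix.mulVec_mulVec, hinv]
    simp [Matrix.mulVec_smul, hker]
end

section
/- (Corollary 1.) Let A = B + C be an n×n real matrix (B symmetric part, C skew-symmetric part) and suppose û in the interior of S_n satisfies Bû = m̄(û)𝟏 and Cû = 0. If û is a strict local maximum of the mean fitness m̄(u) = u·Au on S_n (i.e., m̄(u) < m̄(û) for all u ≠ û in some S_n-neighborhood of û), then û is evolutionarily stable: û·Au > u·Au for all u ≠ û in that neighborhood of û in S_n. -/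
open Matrix

/-- **Corollary 1.** Let `A = B + C` (`B` symmetric part, `C` skew-symmetric
part) and suppose `û` in the interior of the simplex satisfies `Bû = m̄(û)𝟏` and `Cû = 0`,
with `m̄(u) = u·Au`. If `û` is a strict local maximum of the mean fitness on the simplex,
then `û` is evolutionarily stable: `û·Au > u·Au` for all `u ≠ û` in that simplex
neighborhood of `û`. -/
theorem stmt14 (n : ℕ) (A B C : Matrix (Fin n) (Fin n) ℝ)
    (hB : B = (1 / 2 : ℝ) • (A + Aᵀ)) (hC : C = (1 / 2 : ℝ) • (A - Aᵀ))
    (uh : Fin n → ℝ) (hpos : ∀ i, 0 < uh i) (hsum : ∑ i, uh i = 1)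
    (heq : B.mulVec uh = (fun _ => uh ⬝ᵥ A.mulVec uh))
    (hker : C.mulVec uh = 0)
    (ε : ℝ) (hε : 0 < ε)
    (hmax : ∀ u : Fin n → ℝ, (∀ i, 0 ≤ u i) → ∑ i, u i = 1 →
      u ≠ uh → dist u uh < ε → u ⬝ᵥ A.mulVec u < uh ⬝ᵥ A.mulVec uh) :
    ∀ u : Fin n → ℝ, (∀ i, 0 ≤ u i) → ∑ i, u i = 1 →
      u ≠ uh → dist u uh < ε → uh ⬝ᵥ A.mulVec u > u ⬝ᵥ A.mulVec u := by
  intro u hu hsumu hne hd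
  set m := uh ⬝ᵥ A.mulVec uh with hm
  have hAT : Aᵀ = B - C := by
    rw [hB, hC]; ext i j
    simp [Matrix.add_apply, Matrix.sub_apply]; ring
  have hATu : Aᵀ.mulVec uh = fun _ => m := by
    rw [hAT, Matrix.sub_mulVec, heq, hker]
    ext j; simp
  have key : uh ⬝ᵥ A.mulVec u = m := by
    rw [Matrix.dotProduct_mulVec, ← Matrix.mulVec_transpose, hATu]
    simp [dotProduct, ← Finset.mul_sum, hsumu]
  rw [key]
  exact hmax u hu hsumu hne hd
end

section
/- (Example 1: when the hypercycle equilibrium is a critical point of the fitness surface.) Let k₁, k₂, k₃ > 0, let A = [[0,0,k₁],[k₂,0,0],[0,k₃,0]] with skew-symmetric part C = (A−Aᵀ)/2, and let û = (m̄/k₂, m̄/k₃, m̄/k₁) with m̄ = (1/k₁+1/k₂+1/k₃)⁻¹ be the interior equilibrium. Then Cû = 0 if and only if k₁ = k₂ = k₃; equivalently, the interior equilibrium of the 3-species hypercycle coincides with a constrained critical point of the mean fitness on the hyperplane {u : u·𝟏 = 1} if and only if all rate constants are equal. -/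
open Matrix

/-- **Example 1.** For `k₁, k₂, k₃ > 0`, the 3×3 hypercycle matrix
`A = [[0,0,k₁],[k₂,0,0],[0,k₃,0]]` with skew-symmetric part `C = (A − Aᵀ)/2`, and the
interior equilibrium `û = (m̄/k₂, m̄/k₃, m̄/k₁)` with `m̄ = (1/k₁ + 1/k₂ + 1/k₃)⁻¹`, one has
`Cû = 0` if and only if `k₁ = k₂ = k₃`; i.e., the interior equilibrium coincides with a
constrained critical point of the mean fitness on `{u : u·𝟏 = 1}` iff all rate constants
are equal. -/
theorem stmt17 (k1 k2 k3 : ℝ) (hk1 : 0 < k1) (hk2 : 0 < k2) (hk3 : 0 < k3)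
    (A C : Matrix (Fin 3) (Fin 3) ℝ) (hA : A = !![0, 0, k1; k2, 0, 0; 0, k3, 0])
    (hC : C = (1 / 2 : ℝ) • (A - Aᵀ))
    (mb : ℝ) (hmb : mb = (1 / k1 + 1 / k2 + 1 / k3)⁻¹)
    (uh : Fin 3 → ℝ) (huh : uh = ![mb / k2, mb / k3, mb / k1]) :
    C.mulVec uh = 0 ↔ (k1 = k2 ∧ k2 = k3) := by
  have hmbpos : 0 < mb := by
    rw [hmb]; positivity
  have hk1' := hk1.ne'
  have hk2' := hk2.ne'
  have hk3' := hk3.ne'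
  subst hA hC huh
  have hT : (!![0, 0, k1; k2, 0, 0; 0, k3, 0] : Matrix (Fin 3) (Fin 3) ℝ)ᵀ =
      !![0, k2, 0; 0, 0, k3; k1, 0, 0] := by
    ext i j; fin_cases i <;> fin_cases j <;> simp [Matrix.vecHead, Matrix.vecTail]
  have key : ∀ i, (((1 / 2 : ℝ) • ((!![0, 0, k1; k2, 0, 0; 0, k3, 0] : Matrix (Fin 3) (Fin 3) ℝ)
      - (!![0, 0, k1; k2, 0, 0; 0, k3, 0] : Matrix (Fin 3) (Fin 3) ℝ)ᵀ)) *ᵥ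
      ![mb / k2, mb / k3, mb / k1]) i =
      ![(1/2) * (mb - k2 * mb / k3), (1/2) * (mb - k3 * mb / k1),
        (1/2) * (mb - k1 * mb / k2)] i := by
    intro i
    rw [hT]
    fin_cases i
    · simp [Matrix.mulVec, dotProduct, Fin.sum_univ_three]
      rw [mul_assoc (2⁻¹:ℝ) k1 (mb / k1), mul_comm k1 (mb / k1), div_mul_cancel₀ mb hk1']; ring
    · simp [Matrix.mulVec, dotProduct, Fin.sum_univ_three]
      rw [mul_assoc (2⁻¹:ℝ) k2 (mb / k2), mul_comm k2 (mb / k2), div_mul_cancel₀ mb hk2']; ring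
    · simp [Matrix.mulVec, dotProduct, Fin.sum_univ_three]
      rw [mul_assoc (2⁻¹:ℝ) k3 (mb / k3), mul_comm k3 (mb / k3), div_mul_cancel₀ mb hk3']; ring
  constructor
  · intro h
    have h0 := (congrFun h 0).symm.trans (key 0) |>.symm
    have h1 := (congrFun h 1).symm.trans (key 1) |>.symm
    have h2 := (congrFun h 2).symm.trans (key 2) |>.symm
    simp at h0 h1 h2
    have e0 : mb - k2 * mb / k3 = 0 := by linarith
    have e1 : mb - k3 * mb / k1 = 0 := by linarith
    have f0 : mb * k3 = k2 * mb := by field_simp at e0; linarith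
    have f1 : mb * k1 = k3 * mb := by field_simp at e1; linarith
    have hk23 : k2 = k3 := by
      have := mul_left_cancel₀ hmbpos.ne' (by linarith [f0] : mb * k2 = mb * k3)
      exact this
    have hk12 : k1 = k2 := by
      have := mul_left_cancel₀ hmbpos.ne' (by linarith [f1] : mb * k1 = mb * k3)
      rw [this, hk23]
    exact ⟨hk12, hk23⟩
  · rintro ⟨h12, h23⟩
    subst h12 h23
    funext i
    rw [key i]
    fin_cases i <;> simp <;> field_simp <;> ring
end

section
/- (Example 1: negative definiteness of the hypercycle fitness form on the constraint plane.) Let k₁, k₂, k₃ > 0 and let B = (1/2)[[0,k₂,k₁],[k₂,0,k₃],[k₁,k₃,0]] be the symmetric part of the 3×3 hypercycle matrix. If (k₁ − k₂)² + k₃² < 2k₃(k₁ + k₂) (equivalently (k₁ − k₂ + k₃)² < 4k₁k₃), then w·Bw < 0 for every nonzero w ∈ ℝ³ with w₁ + w₂ + w₃ = 0; i.e., the quadratic form of the mean fitness is negative definite on the plane orthogonal to 𝟏. In particular this holds for k₁ = 0.25, k₂ = 0.3, k₃ = 0.35. -/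
open Matrix

/-- **Example 1: negative definiteness of the hypercycle fitness form on the
constraint plane.** For `k₁, k₂, k₃ > 0` and `B = (1/2)[[0,k₂,k₁],[k₂,0,k₃],[k₁,k₃,0]]`
(the symmetric part of the hypercycle matrix), if `(k₁ − k₂)² + k₃² < 2k₃(k₁ + k₂)`
(equivalently, `(k₁ − k₂ + k₃)² < 4k₁k₃`), then `w·Bw < 0` for every nonzero `w ∈ ℝ³` with
`w₁ + w₂ + w₃ = 0`. In particular the hypothesis holds for `k₁ = 0.25`, `k₂ = 0.3`,
`k₃ = 0.35`. -/
theorem stmt18 (k1 k2 k3 : ℝ) (hk1 : 0 < k1) (hk2 : 0 < k2) (hk3 : 0 < k3)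
    (B : Matrix (Fin 3) (Fin 3) ℝ)
    (hB : B = (1 / 2 : ℝ) • !![0, k2, k1; k2, 0, k3; k1, k3, 0])
    (hcond : (k1 - k2) ^ 2 + k3 ^ 2 < 2 * k3 * (k1 + k2)) :
    ((k1 - k2) ^ 2 + k3 ^ 2 < 2 * k3 * (k1 + k2) ↔ (k1 - k2 + k3) ^ 2 < 4 * k1 * k3) ∧
    (∀ w : Fin 3 → ℝ, w ≠ 0 → w 0 + w 1 + w 2 = 0 → w ⬝ᵥ B.mulVec w < 0) ∧
    ((0.25 : ℝ) - 0.3) ^ 2 + (0.35 : ℝ) ^ 2 < 2 * 0.35 * (0.25 + 0.3) := by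
  refine ⟨by constructor <;> intro h <;> nlinarith, ?_, by norm_num⟩
  intro w hw hsum
  have hQ : w ⬝ᵥ B.mulVec w = k2 * (w 0 * w 1) + k1 * (w 0 * w 2) + k3 * (w 1 * w 2) := by
    subst hB
    simp [Matrix.mulVec, dotProduct, Fin.sum_univ_three]
    ring
  have h2 : w 2 = -(w 0 + w 1) := by linarith
  have hne : w 0 ≠ 0 ∨ w 1 ≠ 0 := by
    by_contra h
    push_neg at h
    apply hw
    funext i
    fin_cases i <;> simp [h.1, h.2, h2]
  rw [hQ, h2]
  have hd : 0 < 4 * k1 * k3 - (k1 + k3 - k2) ^ 2 := by nlinarith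
  rcases hne with h | h
  · have h0 : 0 < w 0 ^ 2 := by positivity
    nlinarith [sq_nonneg (2 * k3 * w 1 + (k1 + k3 - k2) * w 0), mul_pos hd h0]
  · have h0 : 0 < w 1 ^ 2 := by positivity
    nlinarith [sq_nonneg (2 * k1 * w 0 + (k1 + k3 - k2) * w 1), mul_pos hd h0]
end
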